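/- Let q > 1 be a rational number. Then the Puiseux monoid M_q = ⟨q^n : n ∈ ℕ₀⟩ satisfies the ascending chain condition on principal ideals. -/

import Mathlib

/-- The exponentially cyclic Puiseux monoid `M_q = ⟨q^n : n ∈ ℕ₀⟩`. -/
def Mq (q : ℚ) : AddSubmonoid ℚ :=
  AddSubmonoid.closure (Set.range fun n : ℕ => q ^ n)

lemma Mq_eq_zero_or_one_le {q : ℚ} (hq : 1 < q) {a : ℚ} (ha : a ∈ Mq q) :
    a = 0 ∨ 1 ≤ a := by
  induction ha using AddSubmonoid.closure_induction with
  | mem x hx =>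
    obtain ⟨n, rfl⟩ := hx
    exact Or.inr (one_le_pow₀ hq.le)
  | zero => exact Or.inl rfl
  | add a b _ _ ha hb =>
    rcases ha with rfl | ha <;> rcases hb with rfl | hb
    · simp
    · simpa using Or.inr hb
    · simpa using Or.inr ha
    · exact Or.inr (le_trans ha (le_add_of_nonneg_right (by linarith)))

lemma Mq_nonneg {q : ℚ} (hq : 1 < q) {a : ℚ} (ha : a ∈ Mq q) : 0 ≤ a := by
  rcases Mq_eq_zero_or_one_le hq ha with rfl | h
  · exact le_refl 0
  · linarith

theorem Mq_ACCP_of_one_lt (q : ℚ) (hq : 1 < q) :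
    ∀ x : ℕ → Mq q, (∀ n : ℕ, ∃ d : Mq q, x n = x (n + 1) + d) →
      ∃ N : ℕ, ∀ n : ℕ, N ≤ n →
        {y : Mq q | ∃ d : Mq q, y = x n + d} =
          {y : Mq q | ∃ d : Mq q, y = x N + d} := by
  intro x hx
  set v : ℕ → ℚ := fun n => (x n : ℚ) with hv
  have hstep : ∀ n, v n = v (n + 1) ∨ v (n + 1) + 1 ≤ v n := by
    intro n
    obtain ⟨d, hd⟩ := hx n
    have hdv : v n = v (n + 1) + (d : ℚ) := by
      simpa [hv] using congrArg (fun y : Mq q => (y : ℚ)) hd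
    rcases Mq_eq_zero_or_one_le hq d.2 with h0 | h1
    · left; rw [hdv, h0, add_zero]
    · right; linarith
  set g : ℕ → ℕ := fun n => ⌊v n⌋₊ with hg
  have hnn : ∀ n, 0 ≤ v n := fun n => Mq_nonneg hq (x n).2
  have hgstep : ∀ n, v n = v (n + 1) ∨ g (n + 1) < g n := by
    intro n
    rcases hstep n with h | h
    · exact Or.inl h
    · right
      have : (g (n + 1) : ℚ) + 1 ≤ v n :=
        le_trans (by have := Nat.floor_le (hnn (n + 1)); linarith) h
      have h2 : g (n + 1) + 1 ≤ g n := Nat.le_floor (by push_cast; linarith)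
      omega
  obtain ⟨m, hmem, hmin⟩ := Nat.lt_wfRel.wf.has_min (Set.range g) ⟨g 0, 0, rfl⟩
  obtain ⟨N, rfl⟩ := hmem
  have hconst : ∀ n, N ≤ n → x n = x N := by
    intro n hn
    induction n with
    | zero => rw [Nat.le_zero.mp hn]
    | succ k ih =>
      rcases Nat.lt_or_ge N (k + 1) with hlt | hge
      · have hk : N ≤ k := by omega
        have hxk : x k = x N := ih hk
        rcases hgstep k with h | h
        · apply Subtype.ext
          have : (x (k + 1) : ℚ) = (x k : ℚ) := h.symm
          rw [this, hxk]
        · exfalso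
          have hgk : g k = g N := by simp only [hg, hv, hxk]
          rw [hgk] at h
          exact hmin (g (k + 1)) ⟨k + 1, rfl⟩ h
      · have : N = k + 1 := by omega
        rw [this]
  refine ⟨N, fun n hn => ?_⟩
  rw [hconst n hn]
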